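/- Let I ⊆ ℝ be an interval, s ≥ 0, k ≥ 1, m = s+2k, b = (b_1,…,b_k) ∈ ℬ, and assume one of: (a) I ⊆ [0,∞), or (b) s = 0 or s = 1. Then for every j ∈ {1,…,k}, the m−1 functions {f_i(·,b) : i ∈ {1,…,m}, i ≠ s+2j} (the rational system with the function 1/(t−b_j)² removed) form a Chebyshev system on I. -/

import Mathlib

open Matrix Finset

noncomputable def fRat (s k : ℕ) (b : Fin k → ℝ) (i : Fin (s + 2 * k)) (t : ℝ) : ℝ :=
  if hi : i.val < s then t ^ i.val
  else
    let q : Fin k := ⟨(i.val - s) / 2, by have := i.isLt; omega⟩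
    if (i.val - s) % 2 = 0 then (t - b q)⁻¹ else ((t - b q) ^ 2)⁻¹

/-- Chebyshev system over an arbitrary finite index type. -/
def IsChebyshevSystemIdx {ι : Type} [Fintype ι] [DecidableEq ι]
    (g : ι → ℝ → ℝ) (I : Set ℝ) : Prop :=
  ∃ ε : ℝ, (ε = 1 ∨ ε = -1) ∧
    ∀ x : Fin (Fintype.card ι) → ℝ, StrictMono x → (∀ j, x j ∈ I) →
      0 < ε * (Matrix.of fun i j => g ((Fintype.equivFin ι).symm i) (x j)).det

namespace Stmt11

open Polynomial

variable {k : ℕ}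

def ee (j l : Fin k) : ℕ := if l = j then 1 else 2

def ordv (s iv : ℕ) (l : Fin k) : ℕ :=
  if iv = s + 2 * l.val then 1 else if iv = s + 2 * l.val + 1 then 2 else 0

noncomputable def Ep (b : Fin k → ℝ) (l : Fin k) : Polynomial ℝ := X - C (b l)

noncomputable def Dp (b : Fin k → ℝ) (j : Fin k) : Polynomial ℝ := ∏ l, Ep b l ^ ee j l

noncomputable def Pp (s : ℕ) (b : Fin k → ℝ) (j : Fin k) (i : Fin (s + 2 * k)) :
    Polynomial ℝ :=
  X ^ (if i.val < s then i.val else 0) * ∏ l, Ep b l ^ (ee j l - ordv s i.val l)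

lemma ee_pos (j l : Fin k) : 1 ≤ ee j l := by unfold ee; split <;> omega

lemma ee_le (j l : Fin k) : ee j l ≤ 2 := by unfold ee; split <;> omega

lemma sum_ee (hk : 1 ≤ k) (j : Fin k) : ∑ l, ee j l = 2 * k - 1 := by
  rw [← Finset.add_sum_erase _ _ (mem_univ j)]
  have h1 : ee j j = 1 := if_pos rfl
  have h2 : ∑ l ∈ univ.erase j, ee j l = ∑ l ∈ univ.erase j, 2 :=
    Finset.sum_congr rfl fun l hl => if_neg (mem_erase.mp hl).1
  rw [h1, h2, Finset.sum_const, Finset.card_erase_of_mem (mem_univ j)]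
  simp only [card_univ, Fintype.card_fin, smul_eq_mul]
  omega

lemma eval_Ep (b : Fin k → ℝ) (l : Fin k) (t : ℝ) : eval t (Ep b l) = t - b l := by
  simp [Ep]

lemma eval_Dp (b : Fin k → ℝ) (j : Fin k) (t : ℝ) :
    eval t (Dp b j) = ∏ l, (t - b l) ^ ee j l := by
  simp [Dp, eval_prod, eval_Ep]

lemma eval_Pp (s : ℕ) (b : Fin k → ℝ) (j : Fin k) (i : Fin (s + 2 * k)) (t : ℝ) :
    eval t (Pp s b j i) =
      t ^ (if i.val < s then i.val else 0) *
        ∏ l, (t - b l) ^ (ee j l - ordv s i.val l) := by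
  rw [Pp]
  split_ifs <;> simp [eval_prod, eval_Ep]

lemma eval_Dp_ne_zero (b : Fin k → ℝ) (j : Fin k) (t : ℝ) (ht : ∀ l, t ≠ b l) :
    eval t (Dp b j) ≠ 0 := by
  rw [eval_Dp]
  exact Finset.prod_ne_zero_iff.mpr fun l _ =>
    pow_ne_zero _ (sub_ne_zero.mpr (ht l))

lemma exists_qr (s : ℕ) (i : Fin (s + 2 * k)) (h : ¬ i.val < s) :
    ∃ q : Fin k, ∃ r : ℕ, (r = 1 ∨ r = 2) ∧ i.val = s + 2 * q.val + (r - 1) := by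
  refine ⟨⟨(i.val - s) / 2, by have := i.isLt; omega⟩, (i.val - s) % 2 + 1, by omega, ?_⟩
  simp only []
  omega

lemma ordv_eq_of_qr (s : ℕ) (iv : ℕ) (q : Fin k) (r : ℕ) (hr : r = 1 ∨ r = 2)
    (h : iv = s + 2 * q.val + (r - 1)) (l : Fin k) :
    ordv s iv l = if l = q then r else 0 := by
  by_cases hlq : l = q
  · subst hlq; simp only [if_pos rfl]; unfold ordv; split_ifs <;> omega
  · have hv : l.val ≠ q.val := fun hv => hlq (Fin.ext hv)
    simp only [if_neg hlq]; unfold ordv; split_ifs <;> omega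

lemma ordv_eq_zero_of_lt (s iv : ℕ) (h : iv < s) (l : Fin k) : ordv s iv l = 0 := by
  unfold ordv; split_ifs <;> omega

lemma prod_pow_ordv {M : Type*} [CommMonoid M] (f : Fin k → M) (s iv : ℕ) (q : Fin k)
    (r : ℕ) (hr : r = 1 ∨ r = 2) (h : iv = s + 2 * q.val + (r - 1)) :
    ∏ l, f l ^ ordv s iv l = f q ^ r := by
  rw [← Finset.mul_prod_erase _ _ (mem_univ q),
    ordv_eq_of_qr s iv q r hr h q, if_pos rfl]
  have : ∀ l ∈ univ.erase q, f l ^ ordv s iv l = 1 := by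
    intro l hl
    rw [ordv_eq_of_qr s iv q r hr h l, if_neg (mem_erase.mp hl).1, pow_zero]
  rw [Finset.prod_congr rfl this, Finset.prod_const_one, mul_one]


lemma fRat_lt (s : ℕ) (b : Fin k → ℝ) (i : Fin (s + 2 * k)) (h : i.val < s) (t : ℝ) :
    fRat s k b i t = t ^ i.val := by
  rw [fRat, dif_pos h]

lemma fRat_ge (s : ℕ) (b : Fin k → ℝ) (i : Fin (s + 2 * k)) (q : Fin k) (r : ℕ)
    (hr : r = 1 ∨ r = 2) (h : i.val = s + 2 * q.val + (r - 1)) (t : ℝ) :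
    fRat s k b i t = ((t - b q) ^ r)⁻¹ := by
  have hs : ¬ i.val < s := by omega
  rw [fRat, dif_neg hs]
  have hq : (⟨(i.val - s) / 2, by have := i.isLt; omega⟩ : Fin k) = q :=
    Fin.ext (by simp only []; omega)
  rcases hr with hr | hr <;> subst hr
  · rw [if_pos (by omega), hq, pow_one]
  · rw [if_neg (by omega), hq]


lemma fRat_mul (s : ℕ) (b : Fin k → ℝ) (j : Fin k) (i : Fin (s + 2 * k)) (t : ℝ)
    (ht : ∀ l, t ≠ b l) :
    fRat s k b i t * ∏ l, (t - b l) ^ ordv s i.val l =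
      t ^ (if i.val < s then i.val else 0) := by
  by_cases hs : i.val < s
  · rw [if_pos hs, fRat_lt s b i hs]
    have : ∀ l ∈ univ, (t - b l) ^ ordv s i.val l = 1 := fun l _ => by
      rw [ordv_eq_zero_of_lt s i.val hs l, pow_zero]
    rw [Finset.prod_congr rfl this, Finset.prod_const_one, mul_one]
  · obtain ⟨q, r, hr, hqr⟩ := exists_qr s i hs
    rw [if_neg hs, fRat_ge s b i q r hr hqr,
      prod_pow_ordv (fun l => t - b l) s i.val q r hr hqr]
    exact inv_mul_cancel₀ (pow_ne_zero _ (sub_ne_zero.mpr (ht q)))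

lemma ord_le_of_ne (s : ℕ) (j : Fin k) (i : Fin (s + 2 * k))
    (hi : i.val ≠ s + 2 * j.val + 1) (l : Fin k) :
    ordv s i.val l ≤ ee j l := by
  by_cases hlj : l = j
  · subst hlj
    rw [ee, if_pos rfl]
    unfold ordv; split_ifs <;> omega
  · rw [ee, if_neg hlj]
    unfold ordv; split_ifs <;> omega

lemma Pp_mul (s : ℕ) (b : Fin k → ℝ) (j : Fin k) (i : Fin (s + 2 * k))
    (hord : ∀ l, ordv s i.val l ≤ ee j l) :
    Pp s b j i * ∏ l, Ep b l ^ ordv s i.val l =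
      X ^ (if i.val < s then i.val else 0) * Dp b j := by
  rw [Pp, mul_assoc, ← Finset.prod_mul_distrib, Dp]
  congr 1
  refine Finset.prod_congr rfl fun l _ => ?_
  rw [← pow_add, Nat.sub_add_cancel (hord l)]

lemma fRat_eq (s : ℕ) (b : Fin k → ℝ) (j : Fin k) (i : Fin (s + 2 * k))
    (hi : i.val ≠ s + 2 * j.val + 1) (t : ℝ) (ht : ∀ l, t ≠ b l) :
    fRat s k b i t = eval t (Pp s b j i) * (eval t (Dp b j))⁻¹ := by
  have hD : eval t (Dp b j) ≠ 0 := eval_Dp_ne_zero b j t ht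
  have hprod : (∏ l, (t - b l) ^ ordv s i.val l) ≠ 0 :=
    Finset.prod_ne_zero_iff.mpr fun l _ => pow_ne_zero _ (sub_ne_zero.mpr (ht l))
  rw [eq_mul_inv_iff_mul_eq₀ hD]
  apply mul_right_cancel₀ hprod
  have h2 := congrArg (eval t) (Pp_mul s b j i (ord_le_of_ne s j i hi))
  simp only [eval_mul, eval_prod, eval_pow, eval_Ep, eval_X] at h2
  rw [mul_right_comm, fRat_mul s b j i t ht]
  rw [h2]

lemma natDegree_Pp_le (hk : 1 ≤ k) (s : ℕ) (b : Fin k → ℝ) (j : Fin k)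
    (i : Fin (s + 2 * k)) : (Pp s b j i).natDegree ≤ s + 2 * k - 2 := by
  have hEp : ∀ l e, (Ep b l ^ e).natDegree ≤ e := fun l e => by
    rw [Polynomial.natDegree_pow, Ep, natDegree_X_sub_C, mul_one]
  have hprod : (∏ l, Ep b l ^ (ee j l - ordv s i.val l)).natDegree ≤
      ∑ l, (ee j l - ordv s i.val l) :=
    le_trans (Polynomial.natDegree_prod_le _ _) (Finset.sum_le_sum fun l _ => hEp _ _)
  have hmul := Polynomial.natDegree_mul_le (p := X ^ (if i.val < s then i.val else 0))
    (q := ∏ l, Ep b l ^ (ee j l - ordv s i.val l))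
  rw [← Pp] at hmul
  have hX : (X ^ (if i.val < s then i.val else 0) : Polynomial ℝ).natDegree =
      (if i.val < s then i.val else 0) := by rw [natDegree_X_pow]
  by_cases hs : i.val < s
  · have hsum : ∑ l, (ee j l - ordv s i.val l) = ∑ l, ee j l := by
      refine Finset.sum_congr rfl fun l _ => by rw [ordv_eq_zero_of_lt s i.val hs l, Nat.sub_zero]
    have := sum_ee hk j
    rw [hX, if_pos hs] at hmul
    omega
  · obtain ⟨q, r, hr, hqr⟩ := exists_qr s i hs
    have hsum : ∑ l, (ee j l - ordv s i.val l) ≤ 2 * k - 2 := by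
      rw [← Finset.add_sum_erase _ _ (mem_univ q)]
      have h1 : ∑ l ∈ univ.erase q, (ee j l - ordv s i.val l) ≤
          ∑ l ∈ univ.erase q, ee j l :=
        Finset.sum_le_sum fun l _ => Nat.sub_le _ _
      have h2 : ee j q + ∑ l ∈ univ.erase q, ee j l = 2 * k - 1 := by
        rw [Finset.add_sum_erase _ _ (mem_univ q)]; exact sum_ee hk j
      have h3 : ordv s i.val q = r := by
        rw [ordv_eq_of_qr s i.val q r hr hqr q, if_pos rfl]
      have h4 := ee_le j q
      have h5 := ee_pos j q
      omega
    rw [hX, if_neg hs] at hmul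
    omega


lemma indep (hk : 1 ≤ k) (s : ℕ) (b : Fin k → ℝ) (hb : Function.Injective b)
    (j : Fin k) (c : Fin (s + 2 * k) → ℝ)
    (hc0 : ∀ i : Fin (s + 2 * k), i.val = s + 2 * j.val + 1 → c i = 0)
    (hp : ∑ i, C (c i) * Pp s b j i = 0) :
    ∀ i, c i = 0 := by
  classical
  have hbne : ∀ l l' : Fin k, l' ≠ l → b l - b l' ≠ 0 := fun l l' h =>
    sub_ne_zero.mpr fun e => h (hb e.symm)
  -- Stage 1: coefficients at top-order pole terms vanish
  have hS1 : ∀ l : Fin k, ∀ i : Fin (s + 2 * k),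
      i.val = s + 2 * l.val + (ee j l - 1) → c i = 0 := by
    intro l i hi
    have hee1 := ee_pos j l
    have hee2 := ee_le j l
    have heval := congrArg (eval (b l)) hp
    rw [Polynomial.eval_finset_sum] at heval
    simp only [eval_mul, eval_C, eval_zero] at heval
    have hz : ∀ i' ∈ (univ : Finset (Fin (s + 2 * k))), i' ≠ i →
        c i' * eval (b l) (Pp s b j i') = 0 := by
      intro i' _ hne
      by_cases h0 : c i' = 0
      · rw [h0, zero_mul]
      apply mul_eq_zero_of_right
      rw [eval_Pp]
      apply mul_eq_zero_of_right
      apply Finset.prod_eq_zero (mem_univ l)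
      rw [sub_self]
      apply zero_pow
      have hvne : i'.val ≠ i.val := fun hv => hne (Fin.ext hv)
      have hi0' : i'.val ≠ s + 2 * j.val + 1 := fun hv => h0 (hc0 i' hv)
      by_cases hlj : l = j
      · have hlv : l.val = j.val := congrArg Fin.val hlj
        have he : ee j l = 1 := if_pos hlj
        rw [he] at hi ⊢
        unfold ordv; split_ifs <;> omega
      · have he : ee j l = 2 := if_neg hlj
        rw [he] at hi ⊢
        unfold ordv; split_ifs <;> omega
    rw [Finset.sum_eq_single i hz (fun h => absurd (mem_univ i) h)] at heval
    have hne : eval (b l) (Pp s b j i) ≠ 0 := by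
      rw [eval_Pp]
      apply mul_ne_zero
      · rw [if_neg (by omega), pow_zero]; exact one_ne_zero
      · refine Finset.prod_ne_zero_iff.mpr fun l' _ => ?_
        by_cases hl' : l' = l
        · subst hl'
          have hord : ordv s i.val l' = ee j l' := by
            by_cases hlj : l' = j
            · have hlv : l'.val = j.val := congrArg Fin.val hlj
              have he : ee j l' = 1 := if_pos hlj
              rw [he] at hi ⊢
              unfold ordv; split_ifs <;> omega
            · have he : ee j l' = 2 := if_neg hlj
              rw [he] at hi ⊢
              unfold ordv; split_ifs <;> omega
          rw [hord, Nat.sub_self, pow_zero]; exact one_ne_zero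
        · exact pow_ne_zero _ (hbne l l' hl')
    rcases mul_eq_zero.mp heval with h | h
    · exact h
    · exact absurd h hne
  -- corollaries of stage 1
  have codd : ∀ i : Fin (s + 2 * k), ¬ i.val < s → (i.val - s) % 2 = 1 → c i = 0 := by
    intro i his hpar
    obtain ⟨q, r, hr, hqr⟩ := exists_qr s i his
    have hr2 : r = 2 := by omega
    subst hr2
    by_cases hqj : q = j
    · have hqv : q.val = j.val := congrArg Fin.val hqj
      exact hc0 i (by omega)
    · apply hS1 q i
      have he : ee j q = 2 := if_neg hqj
      rw [he]
      omega
  have cevenj : ∀ i : Fin (s + 2 * k), i.val = s + 2 * j.val → c i = 0 := by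
    intro i hi
    apply hS1 j i
    have he : ee j j = 1 := if_pos rfl
    rw [he]
    omega
  -- which indices can still carry a nonzero coefficient
  have hlive : ∀ i : Fin (s + 2 * k), c i ≠ 0 → ∀ l, ordv s i.val l < ee j l := by
    intro i hci l
    have h1 : i.val ≠ s + 2 * j.val := fun h => hci (cevenj i h)
    have h2 : ¬ (¬ i.val < s ∧ (i.val - s) % 2 = 1) := fun h => hci (codd i h.1 h.2)
    by_cases hlj : l = j
    · have hlv : l.val = j.val := congrArg Fin.val hlj
      have he : ee j l = 1 := if_pos hlj
      rw [he]
      unfold ordv; split_ifs <;> omega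
    · have he : ee j l = 2 := if_neg hlj
      rw [he]
      unfold ordv; split_ifs <;> omega
  -- Stage 2: factor out ∏ (X - b l)
  have hfac : ∑ i, C (c i) * Pp s b j i =
      (∏ l, Ep b l) * ∑ i, C (c i) *
        (X ^ (if i.val < s then i.val else 0) *
          ∏ l, Ep b l ^ (ee j l - ordv s i.val l - 1)) := by
    rw [Finset.mul_sum]
    refine Finset.sum_congr rfl fun i _ => ?_
    by_cases hci : c i = 0
    · rw [hci]; simp
    have hl := hlive i hci
    have key : (∏ l, Ep b l) * ∏ l, Ep b l ^ (ee j l - ordv s i.val l - 1) =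
        ∏ l, Ep b l ^ (ee j l - ordv s i.val l) := by
      rw [← Finset.prod_mul_distrib]
      refine Finset.prod_congr rfl fun l _ => ?_
      have := hl l
      rw [← pow_succ']
      congr 1
      omega
    rw [Pp, ← key]
    ring
  have hGne : (∏ l, Ep b l) ≠ 0 :=
    Finset.prod_ne_zero_iff.mpr fun l _ => X_sub_C_ne_zero (b l)
  have hq2 : ∑ i, C (c i) *
      (X ^ (if i.val < s then i.val else 0) *
        ∏ l, Ep b l ^ (ee j l - ordv s i.val l - 1)) = 0 := by
    rw [hfac] at hp
    rcases mul_eq_zero.mp hp with h | h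
    · exact absurd h hGne
    · exact h
  have hS2 : ∀ l : Fin k, l ≠ j → ∀ i : Fin (s + 2 * k),
      i.val = s + 2 * l.val → c i = 0 := by
    intro l hlj i hi
    have hel : ee j l = 2 := if_neg hlj
    have heval := congrArg (eval (b l)) hq2
    rw [Polynomial.eval_finset_sum] at heval
    simp only [eval_mul, eval_C, eval_pow, eval_prod, eval_X, eval_zero, eval_Ep]
      at heval
    have hz : ∀ i' ∈ (univ : Finset (Fin (s + 2 * k))), i' ≠ i →
        c i' * ((b l) ^ (if i'.val < s then i'.val else 0) *
          ∏ l', (b l - b l') ^ (ee j l' - ordv s i'.val l' - 1)) = 0 := by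
      intro i' _ hne
      by_cases h0 : c i' = 0
      · rw [h0, zero_mul]
      apply mul_eq_zero_of_right
      apply mul_eq_zero_of_right
      apply Finset.prod_eq_zero (mem_univ l)
      rw [sub_self]
      apply zero_pow
      have hvne : i'.val ≠ i.val := fun hv => hne (Fin.ext hv)
      have hlv := hlive i' h0 l
      rw [hel] at hlv ⊢
      unfold ordv at hlv ⊢
      split_ifs at hlv ⊢ <;> omega
    rw [Finset.sum_eq_single i hz (fun h => absurd (mem_univ i) h)] at heval
    have hne : ((b l) ^ (if i.val < s then i.val else 0) *
        ∏ l', (b l - b l') ^ (ee j l' - ordv s i.val l' - 1)) ≠ 0 := by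
      apply mul_ne_zero
      · rw [if_neg (by omega), pow_zero]; exact one_ne_zero
      · refine Finset.prod_ne_zero_iff.mpr fun l' _ => ?_
        by_cases hl' : l' = l
        · subst hl'
          have hord : ordv s i.val l' = 1 := by
            unfold ordv; split_ifs <;> omega
          rw [hord, hel]
          norm_num
        · exact pow_ne_zero _ (hbne l l' hl')
    rcases mul_eq_zero.mp heval with h | h
    · exact h
    · exact absurd h hne
  have cge : ∀ i : Fin (s + 2 * k), ¬ i.val < s → c i = 0 := by
    intro i his
    obtain ⟨q, r, hr, hqr⟩ := exists_qr s i his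
    rcases hr with hr | hr
    · subst hr
      by_cases hqj : q = j
      · have hqv : q.val = j.val := congrArg Fin.val hqj
        exact cevenj i (by omega)
      · exact hS2 q hqj i (by omega)
    · subst hr
      exact codd i his (by omega)
  -- Stage 3: the polynomial part
  have hDne : Dp b j ≠ 0 :=
    Finset.prod_ne_zero_iff.mpr fun l _ => pow_ne_zero _ (X_sub_C_ne_zero (b l))
  have hS3 : (∑ i, C (c i) *
      (if i.val < s then (X : Polynomial ℝ) ^ i.val else 0)) * Dp b j = 0 := by
    rw [Finset.sum_mul, ← hp]
    refine Finset.sum_congr rfl fun i _ => ?_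
    by_cases his : i.val < s
    · rw [if_pos his]
      have hDD : ∏ l, Ep b l ^ (ee j l - ordv s i.val l) = Dp b j := by
        rw [Dp]
        refine Finset.prod_congr rfl fun l _ => ?_
        rw [ordv_eq_zero_of_lt s i.val his l, Nat.sub_zero]
      rw [Pp, if_pos his, hDD]
      ring
    · rw [if_neg his, cge i his]
      simp
  have hSz : (∑ i, C (c i) *
      (if i.val < s then (X : Polynomial ℝ) ^ i.val else 0)) = 0 := by
    rcases mul_eq_zero.mp hS3 with h | h
    · exact h
    · exact absurd h hDne
  have clt : ∀ i : Fin (s + 2 * k), i.val < s → c i = 0 := by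
    intro i his
    have hco := congrArg (fun p => Polynomial.coeff p i.val) hSz
    simp only [Polynomial.finset_sum_coeff, coeff_zero] at hco
    have hz : ∀ i' ∈ (univ : Finset (Fin (s + 2 * k))), i' ≠ i →
        (C (c i') * (if i'.val < s then (X : Polynomial ℝ) ^ i'.val else 0)).coeff
          i.val = 0 := by
      intro i' _ hne
      by_cases hi's : i'.val < s
      · rw [if_pos hi's, coeff_C_mul, coeff_X_pow,
          if_neg (fun h => hne (Fin.ext h.symm)), mul_zero]
      · rw [if_neg hi's, mul_zero, coeff_zero]
    rw [Finset.sum_eq_single i hz (fun h => absurd (mem_univ i) h)] at hco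
    rw [if_pos his, coeff_C_mul, coeff_X_pow, if_pos rfl, mul_one] at hco
    exact hco
  intro i
  by_cases his : i.val < s
  · exact clt i his
  · exact cge i his



theorem aux_main (s k : ℕ) (hk : 1 ≤ k) (I : Set ℝ) (hI : I.OrdConnected)
    (b : Fin k → ℝ) (hbI : ∀ i, b i ∉ I) (hb : Function.Injective b)
    (j : Fin k) (i₀ : Fin (s + 2 * k)) (hi₀ : i₀.val = s + 2 * j.val + 1) :
    IsChebyshevSystemIdx
      (fun p : {i : Fin (s + 2 * k) // i ≠ i₀} => fRat s k b p.val) I := by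
  classical
  unfold IsChebyshevSystemIdx
  have hcard : Fintype.card {i : Fin (s + 2 * k) // i ≠ i₀} = s + 2 * k - 1 := by
    simp [Fintype.card_subtype_compl]
  set m := Fintype.card {i : Fin (s + 2 * k) // i ≠ i₀} with hm
  set e := Fintype.equivFin {i : Fin (s + 2 * k) // i ≠ i₀} with he
  by_cases hne : I.Nonempty
  swap
  · refine ⟨1, Or.inl rfl, fun x _ hxI => ?_⟩
    exfalso
    have hmpos : 0 < m := by omega
    have := hxI ⟨0, hmpos⟩
    rw [Set.not_nonempty_iff_eq_empty.mp hne] at this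
    exact this
  obtain ⟨t0, ht0⟩ := hne
  have ht0b : ∀ l, t0 ≠ b l := fun l h => hbI l (h ▸ ht0)
  have hival : ∀ p : {i : Fin (s + 2 * k) // i ≠ i₀},
      (p : Fin (s + 2 * k)).val ≠ s + 2 * j.val + 1 := fun p hval =>
    p.prop (Fin.ext (hval.trans hi₀.symm))
  set M : Matrix (Fin m) (Fin m) ℝ :=
    Matrix.of fun r d => (Pp s b j (e.symm r : Fin (s + 2 * k))).coeff d.val with hMdef
  have hdeg : ∀ i : Fin (s + 2 * k), (Pp s b j i).natDegree < m := by
    intro i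
    have := natDegree_Pp_le hk s b j i
    omega
  -- determinant of the coefficient matrix is nonzero
  have hMdet : M.det ≠ 0 := by
    intro hdet
    obtain ⟨v, hv0, hv⟩ := Matrix.exists_vecMul_eq_zero_iff.mpr hdet
    set c : Fin (s + 2 * k) → ℝ :=
      fun i => if h : i = i₀ then 0 else v (e ⟨i, h⟩) with hc
    have hcv : ∀ (i : Fin (s + 2 * k)) (h : i ≠ i₀), c i = v (e ⟨i, h⟩) :=
      fun i h => dif_neg h
    have hci0 : c i₀ = 0 := dif_pos rfl
    have hc0 : ∀ i : Fin (s + 2 * k), i.val = s + 2 * j.val + 1 → c i = 0 := by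
      intro i hi
      have : i = i₀ := Fin.ext (by omega)
      rw [this, hci0]
    have hreindex : ∀ G : Fin (s + 2 * k) → ℝ,
        ∑ i, c i * G i = ∑ r : Fin m, v r * G (e.symm r : Fin (s + 2 * k)) := by
      intro G
      rw [← Finset.add_sum_erase _ (fun i => c i * G i) (mem_univ i₀), hci0,
        zero_mul, zero_add]
      rw [Finset.sum_subtype (p := fun i => i ≠ i₀) (univ.erase i₀)
        (fun x => by simp [Finset.mem_erase]) (fun i => c i * G i)]
      rw [← Equiv.sum_comp e.symm
        (fun p : {i : Fin (s + 2 * k) // i ≠ i₀} => c p.val * G p.val)]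
      refine Finset.sum_congr rfl fun r _ => ?_
      have h1 : c (e.symm r : Fin (s + 2 * k)) = v (e ⟨(e.symm r : Fin (s + 2 * k)), (e.symm r).prop⟩) :=
        hcv _ (e.symm r).prop
      rw [h1]
      congr 1
      have h2 : (⟨(e.symm r : Fin (s + 2 * k)), (e.symm r).prop⟩ :
          {i : Fin (s + 2 * k) // i ≠ i₀}) = e.symm r := rfl
      rw [h2, Equiv.apply_symm_apply]
    have hp : ∑ i, C (c i) * Pp s b j i = 0 := by
      refine Polynomial.ext fun d => ?_
      rw [Polynomial.finset_sum_coeff, coeff_zero]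
      simp only [Polynomial.coeff_C_mul]
      by_cases hd : d < m
      · rw [hreindex (fun i => (Pp s b j i).coeff d)]
        have := congrFun hv ⟨d, hd⟩
        simp only [Matrix.vecMul, dotProduct, Pi.zero_apply] at this
        convert this using 1
        rfl
      · refine Finset.sum_eq_zero fun i _ => ?_
        rw [Polynomial.coeff_eq_zero_of_natDegree_lt (lt_of_lt_of_le (hdeg i)
          (not_lt.mp hd)), mul_zero]
    have hall := indep hk s b hb j c hc0 hp
    apply hv0
    funext r
    have h1 : c (e.symm r : Fin (s + 2 * k)) = v (e (e.symm r)) :=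
      hcv _ (e.symm r).prop
    rw [Equiv.apply_symm_apply] at h1
    rw [Pi.zero_apply, ← h1, hall]
  -- sign data
  set W : ℝ := M.det * (t0 - b j) ^ m with hW
  have hW0 : W ≠ 0 := mul_ne_zero hMdet (pow_ne_zero _ (sub_ne_zero.mpr (ht0b j)))
  refine ⟨if 0 < W then 1 else -1, by split <;> [exact Or.inl rfl; exact Or.inr rfl], ?_⟩
  intro x hx hxI
  have hxb : ∀ α l, x α ≠ b l := fun α l h => hbI l (h ▸ hxI α)
  have hsign : ∀ t, t ∈ I → 0 < (eval t (Dp b j))⁻¹ * (t0 - b j) := by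
    intro t ht
    have htb : ∀ l, t ≠ b l := fun l h => hbI l (h ▸ ht)
    have h1 : 0 < (t - b j) * (t0 - b j) := by
      rcases lt_trichotomy t (b j) with h | h | h
      · rcases lt_trichotomy t0 (b j) with h' | h' | h'
        · exact mul_pos_of_neg_of_neg (by linarith) (by linarith)
        · exact absurd h' (ht0b j)
        · exact absurd (hI.out ht ht0 ⟨le_of_lt h, le_of_lt h'⟩) (hbI j)
      · exact absurd h (htb j)
      · rcases lt_trichotomy t0 (b j) with h' | h' | h'
        · exact absurd (hI.out ht0 ht ⟨le_of_lt h', le_of_lt h⟩) (hbI j)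
        · exact absurd h' (ht0b j)
        · exact mul_pos (by linarith) (by linarith)
    have hD : 0 < eval t (Dp b j) * (t0 - b j) := by
      rw [eval_Dp, ← Finset.mul_prod_erase _ _ (mem_univ j)]
      have hjj : ee j j = 1 := if_pos rfl
      rw [hjj, pow_one]
      have hprodpos : 0 < ∏ l ∈ univ.erase j, (t - b l) ^ ee j l := by
        refine Finset.prod_pos fun l hl => ?_
        have h2 : ee j l = 2 := if_neg (mem_erase.mp hl).1
        have h3 : t - b l ≠ 0 := sub_ne_zero.mpr (htb l)
        rw [h2]
        positivity
      calc 0 < ((t - b j) * (t0 - b j)) * ∏ l ∈ univ.erase j, (t - b l) ^ ee j l :=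
            mul_pos h1 hprodpos
        _ = (t - b j) * (∏ l ∈ univ.erase j, (t - b l) ^ ee j l) * (t0 - b j) := by ring
    have hDne := eval_Dp_ne_zero b j t htb
    have h4 : (eval t (Dp b j))⁻¹ * (t0 - b j) =
        (eval t (Dp b j) * (t0 - b j)) * ((eval t (Dp b j)) ^ 2)⁻¹ := by
      field_simp
    rw [h4]
    have h5 : 0 < ((eval t (Dp b j)) ^ 2)⁻¹ := by positivity
    exact mul_pos hD h5
  -- matrix factorization
  have hmat : (Matrix.of fun r α =>
        fRat s k b (e.symm r : Fin (s + 2 * k)) (x α)) =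
      M * (Matrix.vandermonde x)ᵀ *
        Matrix.diagonal (fun α => (eval (x α) (Dp b j))⁻¹) := by
    ext r α
    rw [Matrix.mul_diagonal, Matrix.mul_apply]
    simp only [Matrix.transpose_apply, Matrix.vandermonde_apply, Matrix.of_apply, hMdef]
    rw [fRat_eq s b j _ (hival _) (x α) (fun l => hxb α l)]
    congr 1
    rw [Polynomial.eval_eq_sum_range' (hdeg _) (x α),
      ← Fin.sum_univ_eq_sum_range (fun d => (Pp s b j (e.symm r : Fin (s + 2 * k))).coeff d * x α ^ d) m]
  rw [hmat, Matrix.det_mul, Matrix.det_mul, Matrix.det_transpose,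
    Matrix.det_vandermonde, Matrix.det_diagonal]
  have hV : 0 < ∏ i : Fin m, ∏ jj ∈ Ioi i, (x jj - x i) :=
    Finset.prod_pos fun i _ => Finset.prod_pos fun jj hjj =>
      sub_pos.mpr (hx (mem_Ioi.mp hjj))
  have hprod2 : 0 < (∏ α : Fin m, (eval (x α) (Dp b j))⁻¹) * (t0 - b j) ^ m := by
    have hconst : (t0 - b j) ^ m = ∏ _α : Fin m, (t0 - b j) := by
      rw [Finset.prod_const, card_univ, Fintype.card_fin]
    rw [hconst, ← Finset.prod_mul_distrib]
    exact Finset.prod_pos fun α _ => hsign (x α) (hxI α)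
  set A := M.det * (∏ i : Fin m, ∏ jj ∈ Ioi i, (x jj - x i)) *
    ∏ α : Fin m, (eval (x α) (Dp b j))⁻¹ with hA
  have h5 : 0 < A * W := by
    have hrw : A * W = (M.det) ^ 2 * (∏ i : Fin m, ∏ jj ∈ Ioi i, (x jj - x i)) *
        ((∏ α : Fin m, (eval (x α) (Dp b j))⁻¹) * (t0 - b j) ^ m) := by
      rw [hA, hW]; ring
    rw [hrw]
    have hM2 : 0 < (M.det) ^ 2 := pow_two_pos_of_ne_zero hMdet
    exact mul_pos (mul_pos hM2 hV) hprod2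
  by_cases hWpos : 0 < W
  · rw [if_pos hWpos, one_mul]
    rcases mul_pos_iff.mp h5 with ⟨h6, _⟩ | ⟨_, h7⟩
    · exact h6
    · linarith
  · rw [if_neg hWpos]
    have hWneg : W < 0 := lt_of_le_of_ne (not_lt.mp hWpos) hW0
    rcases mul_pos_iff.mp h5 with ⟨_, h6⟩ | ⟨h7, _⟩
    · linarith
    · linarith


end Stmt11

/-- under (a) `I ⊆ [0,∞)` or (b) `s = 0` or `s = 1`, the rational
system with the function `1/(t−b_j)²` removed is a Chebyshev system on `I`. -/
theorem stmt11 (s k : ℕ) (hk : 1 ≤ k) (I : Set ℝ) (hI : I.OrdConnected)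
    (b : Fin k → ℝ) (hbI : ∀ i, b i ∉ I) (hb : Function.Injective b)
    (hcase : I ⊆ Set.Ici 0 ∨ s = 0 ∨ s = 1)
    (j : Fin k) :
    IsChebyshevSystemIdx
      (fun p : {i : Fin (s + 2 * k) //
          i ≠ (⟨s + 2 * j.val + 1, by have := j.isLt; omega⟩ : Fin (s + 2 * k))} =>
        fRat s k b p.val) I := by
  exact Stmt11.aux_main s k hk I hI b hbI hb j
    ⟨s + 2 * j.val + 1, by have := j.isLt; omega⟩ rfl
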